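/- arXiv:2502.06884 — 4 statements merged into one kernel-verified Lean document; each statement's English description precedes it below -/
import Mathlib

section
/- Let Z_1, …, Z_{n+1} be real-valued random variables on a probability space that are exchangeable. Let α ∈ (0,1), set k = ⌈(n+1)(1−α)⌉, and assume k ≤ n. Let q̂ be the (random) k-th smallest value among Z_1, …, Z_n. Then P(Z_{n+1} ≤ q̂) ≥ 1 − α. -/
open MeasureTheory

/-- The `k`-th smallest value (`k`-th order statistic) of a tuple of `n` real numbers:
the `k`-th entry of the tuple sorted in nondecreasing order. -/
noncomputable def kthSmallest {n : ℕ} (s : Fin n → ℝ) (k : ℕ) : ℝ :=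
  ((Multiset.ofList (List.ofFn s)).sort (· ≤ ·)).getD (k - 1) 0

open scoped ENNReal NNReal

lemma le_kthSmallest {n k : ℕ} (hk1 : 1 ≤ k) (hkn : k ≤ n) (s : Fin n → ℝ) (t : ℝ)
    (h : (Finset.univ.filter (fun i => s i < t)).card < k) : t ≤ kthSmallest s k := by
  classical
  by_contra hlt
  push_neg at hlt
  set l := ((Multiset.ofList (List.ofFn s)).sort (· ≤ ·)) with hl
  have hlen : l.length = n := by
    simp [hl]
  have hk1n : k - 1 < l.length := by omega
  have hsorted : l.Pairwise (· ≤ ·) := Multiset.pairwise_sort _ _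
  -- all elements of l.take k are < t
  have hkt : l.get ⟨k-1, hk1n⟩ < t := by
    have hgd : l.getD (k-1) 0 = l.get ⟨k-1, hk1n⟩ := List.getD_eq_get _ _ ⟨k-1, hk1n⟩
    rw [kthSmallest] at hlt; rw [← hl, hgd] at hlt; exact hlt
  have htake : ∀ x ∈ l.take k, x < t := by
    intro x hx
    obtain ⟨i, hi, rfl⟩ := List.getElem_of_mem hx
    have hi' : i < k ∧ i < l.length := by
      rw [List.length_take] at hi; omega
    rw [List.getElem_take]
    have h1 : l.get ⟨i, hi'.2⟩ ≤ l.get ⟨k-1, hk1n⟩ := by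
      apply hsorted.rel_get_of_le
      simp only [Fin.mk_le_mk]; omega
    calc l[i] = l.get ⟨i, hi'.2⟩ := rfl
      _ ≤ l.get ⟨k-1, hk1n⟩ := h1
      _ < t := hkt
  -- so the count of elements < t is ≥ k
  have hsub : (l.take k).filter (fun x => decide (x < t)) = l.take k := by
    apply List.filter_eq_self.mpr
    intro x hx; simpa using htake x hx
  have hsublist : ((l.take k).filter (fun x => decide (x < t))).Sublist (l.filter (fun x => decide (x < t))) :=
    List.Sublist.filter _ (List.take_sublist _ _)
  have hcount : k ≤ (l.filter (fun x => decide (x < t))).length := by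
    have := hsublist.length_le
    rw [hsub] at this
    have hklen : (l.take k).length = k := by simp [hlen]; omega
    omega
  -- relate to the Finset card
  have hperm : (Multiset.ofList l) = Multiset.map s Finset.univ.val := by
    rw [hl, Multiset.sort_eq]
    simp [List.ofFn_eq_map]
  have : (l.filter (fun x => decide (x < t))).length = (Finset.univ.filter (fun i => s i < t)).card := by
    calc (l.filter (fun x => decide (x < t))).length
        = Multiset.card ((Multiset.ofList l).filter (fun x => x < t)) := by
          simp
      _ = Multiset.card ((Multiset.map s Finset.univ.val).filter (fun x => x < t)) := by rw [hperm]
      _ = Multiset.countP (fun x => x < t) (Multiset.map s Finset.univ.val) := by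
          rw [Multiset.countP_eq_card_filter]
      _ = Multiset.countP (fun i => s i < t) Finset.univ.val := by
          rw [Multiset.countP_map, Multiset.countP_eq_card_filter]
      _ = (Finset.univ.filter (fun i => s i < t)).card := by
          rw [Multiset.countP_eq_card_filter]; rfl
  omega

lemma filter_perm_card {N : ℕ} (π : Equiv.Perm (Fin N)) (p : Fin N → Prop) [DecidablePred p] :
    (Finset.univ.filter (fun i => p (π i))).card = (Finset.univ.filter p).card := by
  classical
  have : (Finset.univ.filter (fun i => p (π i))) = (Finset.univ.filter p).map π.symm.toEmbedding := by
    ext j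
    simp [Equiv.symm_apply_eq]
  rw [this, Finset.card_map]

lemma count_low_ranks {N k : ℕ} (hk : k ≤ N) (x : Fin N → ℝ) :
    k ≤ (Finset.univ.filter
      (fun j => (Finset.univ.filter (fun i => x i < x j)).card < k)).card := by
  classical
  set σ := Tuple.sort x with hσ
  have hmono : Monotone (x ∘ σ) := Tuple.monotone_sort x
  have hinj : Function.Injective (fun m : Fin k => σ (Fin.castLE hk m)) := by
    intro a b hab
    exact Fin.castLE_injective hk (σ.injective hab)
  have hsub : Finset.univ.image (fun m : Fin k => σ (Fin.castLE hk m)) ⊆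
      Finset.univ.filter (fun j => (Finset.univ.filter (fun i => x i < x j)).card < k) := by
    intro j hj
    simp only [Finset.mem_image, Finset.mem_univ, true_and] at hj
    obtain ⟨m, rfl⟩ := hj
    simp only [Finset.mem_filter, Finset.mem_univ, true_and]
    set m' : Fin N := Fin.castLE hk m with hm'
    have hcard : (Finset.univ.filter (fun i => x i < x (σ m'))).card
        = (Finset.univ.filter (fun i => x (σ i) < x (σ m'))).card :=
      (filter_perm_card σ (fun i => x i < x (σ m'))).symm
    rw [hcard]
    have hsubset : (Finset.univ.filter (fun i => x (σ i) < x (σ m'))) ⊆ Finset.Iio m' := by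
      intro i hi
      simp only [Finset.mem_filter, Finset.mem_univ, true_and] at hi
      simp only [Finset.mem_Iio]
      by_contra hle
      push_neg at hle
      exact absurd (hmono hle) (not_le.mpr hi)
    calc (Finset.univ.filter (fun i => x (σ i) < x (σ m'))).card
        ≤ (Finset.Iio m').card := Finset.card_le_card hsubset
      _ = (m' : ℕ) := by simp
      _ = (m : ℕ) := rfl
      _ < k := m.isLt
  calc k = (Finset.univ.image (fun m : Fin k => σ (Fin.castLE hk m))).card := by
        rw [Finset.card_image_of_injective _ hinj, Finset.card_univ, Fintype.card_fin]
    _ ≤ _ := Finset.card_le_card hsub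

/-- Conformal coverage guarantee for exchangeable scores: if `Z 0, …, Z n` are exchangeable
real random variables, `α ∈ (0,1)`, `k = ⌈(n+1)(1-α)⌉ ≤ n`, and `q̂` is the `k`-th smallest
among the first `n` of them, then `P(Z_{n+1} ≤ q̂) ≥ 1 - α`. -/
theorem conformal_coverage_exchangeable
    {Ω : Type*} [MeasurableSpace Ω] (P : Measure Ω) [IsProbabilityMeasure P]
    (n : ℕ) (Z : Fin (n + 1) → Ω → ℝ)
    (hZ : ∀ i, Measurable (Z i))
    (hexch : ∀ π : Equiv.Perm (Fin (n + 1)),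
      Measure.map (fun ω => fun i => Z (π i) ω) P = Measure.map (fun ω => fun i => Z i ω) P)
    (α : ℝ) (hα : α ∈ Set.Ioo (0 : ℝ) 1)
    (k : ℕ) (hk : k = ⌈((n : ℝ) + 1) * (1 - α)⌉₊) (hkn : k ≤ n) :
    ENNReal.ofReal (1 - α) ≤
      P {ω | Z (Fin.last n) ω ≤ kthSmallest (fun i : Fin n => Z i.castSucc ω) k} := by
  classical
  obtain ⟨hα0, hα1⟩ := hα
  have hk1 : 1 ≤ k := by
    rw [hk]
    exact Nat.one_le_iff_ne_zero.mpr (Nat.ceil_pos.mpr (mul_pos (by positivity) (by linarith))).ne'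
  -- setup
  set g : Fin (n + 1) → (Fin (n + 1) → ℝ) → ℕ :=
    fun j x => (Finset.univ.filter (fun i => x i < x j)).card with hg
  set B : Fin (n + 1) → Set (Fin (n + 1) → ℝ) := fun j => {x | g j x < k} with hBdef
  have hgm : ∀ j, Measurable (g j) := by
    intro j
    have : g j = fun x => ∑ i : Fin (n+1), if x i < x j then 1 else 0 := by
      funext x
      show (Finset.univ.filter (fun i => x i < x j)).card = _
      rw [Finset.card_filter]
    rw [this]
    exact Finset.measurable_sum _ (fun i _ =>
      Measurable.ite (measurableSet_lt (measurable_pi_apply i) (measurable_pi_apply j))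
        measurable_const measurable_const)
  have hB : ∀ j, MeasurableSet (B j) := fun j => (hgm j) (measurableSet_Iio (a := k))
  set Zvec : Ω → (Fin (n + 1) → ℝ) := fun ω i => Z i ω with hZvec
  have hZvm : Measurable Zvec := measurable_pi_lambda _ hZ
  set E : Fin (n + 1) → Set Ω := fun j => Zvec ⁻¹' (B j) with hEdef
  have hE : ∀ j, MeasurableSet (E j) := fun j => hZvm (hB j)
  -- exchangeability : P (E j) = P (E last)
  have heq : ∀ j, P (E j) = P (E (Fin.last n)) := by
    intro j
    set τ : Equiv.Perm (Fin (n + 1)) := Equiv.swap j (Fin.last n) with hτ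
    have hτlast : τ (Fin.last n) = j := Equiv.swap_apply_right _ _
    set pm : (Fin (n + 1) → ℝ) → (Fin (n + 1) → ℝ) := fun x i => x (τ i) with hpm
    have hpmm : Measurable pm := measurable_pi_lambda _ (fun i => measurable_pi_apply (τ i))
    have hBj : B j = pm ⁻¹' (B (Fin.last n)) := by
      ext x
      simp only [hBdef, Set.mem_setOf_eq, Set.mem_preimage, hpm, hg]
      have : (Finset.univ.filter (fun i => x (τ i) < x (τ (Fin.last n)))).card
          = (Finset.univ.filter (fun i => x i < x j)).card := by
        rw [hτlast]
        exact filter_perm_card τ (fun i => x i < x j)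
      rw [this]
    have key : (fun ω => fun i => Z (τ i) ω) = pm ∘ Zvec := rfl
    calc P (E j) = (Measure.map Zvec P) (B j) := (Measure.map_apply hZvm (hB j)).symm
      _ = (Measure.map Zvec P) (pm ⁻¹' (B (Fin.last n))) := by rw [hBj]
      _ = (Measure.map pm (Measure.map Zvec P)) (B (Fin.last n)) :=
          (Measure.map_apply hpmm (hB (Fin.last n))).symm
      _ = (Measure.map (pm ∘ Zvec) P) (B (Fin.last n)) := by
          rw [Measure.map_map hpmm hZvm]
      _ = (Measure.map Zvec P) (B (Fin.last n)) := by
          rw [← key, hexch τ]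
      _ = P (E (Fin.last n)) := Measure.map_apply hZvm (hB (Fin.last n))
  -- counting bound
  have hsum : (k : ℝ≥0∞) ≤ ∑ j : Fin (n + 1), P (E j) := by
    have h1 : ∀ j, P (E j) = ∫⁻ ω, (E j).indicator 1 ω ∂P := by
      intro j; rw [lintegral_indicator_one (hE j)]
    calc (k : ℝ≥0∞) = ∫⁻ _, (k : ℝ≥0∞) ∂P := by simp
      _ ≤ ∫⁻ ω, ∑ j : Fin (n + 1), (E j).indicator 1 ω ∂P := by
          apply lintegral_mono
          intro ω
          have hcount := count_low_ranks (k := k) (by omega) (Zvec ω)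
          have : ∑ j : Fin (n + 1), (E j).indicator (1 : Ω → ℝ≥0∞) ω
              = ((Finset.univ.filter (fun j => ω ∈ E j)).card : ℝ≥0∞) := by
            rw [Finset.card_filter]
            push_cast
            apply Finset.sum_congr rfl
            intro j _
            by_cases hj : ω ∈ E j <;> simp [Set.indicator_apply, hj]
          show (k : ℝ≥0∞) ≤ ∑ j : Fin (n + 1), (E j).indicator 1 ω
          rw [this]
          have hsame : (Finset.univ.filter (fun j => ω ∈ E j))
              = (Finset.univ.filter (fun j =>
                  (Finset.univ.filter (fun i => Zvec ω i < Zvec ω j)).card < k)) := by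
            apply Finset.filter_congr
            intro j _
            simp [hEdef, hBdef, hg, Set.mem_preimage, Set.mem_setOf_eq]
          rw [hsame]
          exact_mod_cast Nat.cast_le.mpr hcount
      _ = ∑ j : Fin (n + 1), ∫⁻ ω, (E j).indicator 1 ω ∂P := by
          rw [lintegral_finset_sum]
          intro j _
          exact measurable_const.indicator (hE j)
      _ = ∑ j : Fin (n + 1), P (E j) := by
          apply Finset.sum_congr rfl; intro j _; rw [h1 j]
  have hsum2 : (k : ℝ≥0∞) ≤ ((n + 1 : ℕ) : ℝ≥0∞) * P (E (Fin.last n)) := by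
    calc (k : ℝ≥0∞) ≤ ∑ j : Fin (n + 1), P (E j) := hsum
      _ = ∑ _j : Fin (n + 1), P (E (Fin.last n)) := Finset.sum_congr rfl (fun j _ => heq j)
      _ = ((n + 1 : ℕ) : ℝ≥0∞) * P (E (Fin.last n)) := by
          rw [Finset.sum_const, Finset.card_univ, Fintype.card_fin, nsmul_eq_mul]
  have hdiv : (k : ℝ≥0∞) / ((n + 1 : ℕ) : ℝ≥0∞) ≤ P (E (Fin.last n)) :=
    ENNReal.div_le_of_le_mul (by rw [mul_comm] at hsum2; exact hsum2)
  -- 1 - α ≤ k / (n+1)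
  have hreal : (1 - α) ≤ (k : ℝ) / ((n : ℝ) + 1) := by
    rw [le_div_iff₀ (by positivity)]
    rw [hk]
    calc (1 - α) * ((n : ℝ) + 1) = ((n : ℝ) + 1) * (1 - α) := by ring
      _ ≤ (⌈((n : ℝ) + 1) * (1 - α)⌉₊ : ℝ) := Nat.le_ceil _
  have hof : ENNReal.ofReal (1 - α) ≤ (k : ℝ≥0∞) / ((n + 1 : ℕ) : ℝ≥0∞) := by
    calc ENNReal.ofReal (1 - α) ≤ ENNReal.ofReal ((k : ℝ) / ((n : ℝ) + 1)) :=
          ENNReal.ofReal_le_ofReal hreal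
      _ = (k : ℝ≥0∞) / ((n + 1 : ℕ) : ℝ≥0∞) := by
          rw [ENNReal.ofReal_div_of_pos (by positivity)]
          congr 1
          · exact ENNReal.ofReal_natCast k
          · push_cast
            rw [ENNReal.ofReal_add (by positivity) (by norm_num)]
            simp [ENNReal.ofReal_natCast]
  -- E last ⊆ target
  have hsubset : E (Fin.last n) ⊆
      {ω | Z (Fin.last n) ω ≤ kthSmallest (fun i : Fin n => Z i.castSucc ω) k} := by
    intro ω hω
    simp only [hEdef, Set.mem_preimage, hBdef, Set.mem_setOf_eq, hg] at hω
    have hcard : (Finset.univ.filter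
        (fun i : Fin n => Z i.castSucc ω < Z (Fin.last n) ω)).card
        ≤ (Finset.univ.filter (fun i : Fin (n+1) => Zvec ω i < Zvec ω (Fin.last n))).card := by
      apply Finset.card_le_card_of_injOn (fun i => i.castSucc)
      · intro i hi
        simp only [Finset.mem_coe, Finset.mem_filter, Finset.mem_univ, true_and] at hi ⊢
        exact hi
      · intro a _ b _ hab
        exact Fin.castSucc_injective n hab
    exact le_kthSmallest hk1 hkn _ _ (by omega)
  exact le_trans hof (le_trans hdiv (measure_mono hsubset))
end

section
/- Let Z_1, …, Z_m be exchangeable real-valued random variables on a probability space, and let k ∈ {1, …, m}. Then P( #{ j ∈ {1, …, m} : Z_j < Z_m } ≤ k − 1 ) ≥ k/m. -/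
open MeasureTheory
open scoped ENNReal

/-- Reindexing a filter-card by a permutation. -/
lemma card_filter_perm {m : ℕ} (π : Equiv.Perm (Fin m)) (p : Fin m → Prop) [DecidablePred p] :
    (Finset.univ.filter fun j => p (π j)).card = (Finset.univ.filter p).card := by
  apply Finset.card_bij (fun a _ => π a)
  · intro a ha
    simp only [Finset.mem_filter, Finset.mem_univ, true_and] at ha ⊢
    exact ha
  · intro a _ b _ h
    exact π.injective h
  · intro b hb
    simp only [Finset.mem_filter, Finset.mem_univ, true_and] at hb
    exact ⟨π.symm b, by simpa using hb, by simp⟩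

/-- Deterministic rank lemma: at least `k` indices have rank count `≤ k - 1`. -/
lemma card_rank_le_ge {m k : ℕ} (hk1 : 1 ≤ k) (hkm : k ≤ m) (v : Fin m → ℝ) :
    k ≤ (Finset.univ.filter fun i : Fin m =>
      (Finset.univ.filter fun j => v j < v i).card ≤ k - 1).card := by
  have hm : 0 < m := lt_of_lt_of_le hk1 hkm
  set σ := Tuple.sort v with hσ
  have hmono : Monotone (v ∘ σ) := Tuple.monotone_sort v
  set t : ℝ := v (σ ⟨k - 1, by omega⟩) with ht
  -- every index whose value is ≤ t has rank count ≤ k - 1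
  have hrank : ∀ i : Fin m, v i ≤ t →
      (Finset.univ.filter fun j => v j < v i).card ≤ k - 1 := by
    intro i hi
    have hsub : (Finset.univ.filter fun j => v j < v i) ⊆
        (Finset.univ.filter fun j => v j < t) := by
      intro j hj
      simp only [Finset.mem_filter, Finset.mem_univ, true_and] at hj ⊢
      exact lt_of_lt_of_le hj hi
    have h1 : (Finset.univ.filter fun j => v j < t).card
        = (Finset.univ.filter fun b => v (σ b) < t).card :=
      (card_filter_perm σ (fun j => v j < t)).symm
    have h2 : (Finset.univ.filter fun b : Fin m => v (σ b) < t).card ≤ k - 1 := by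
      have hsub2 : (Finset.univ.filter fun b : Fin m => v (σ b) < t) ⊆
          (Finset.univ.filter fun b : Fin m => b.val < k - 1) := by
        intro b hb
        simp only [Finset.mem_filter, Finset.mem_univ, true_and] at hb ⊢
        by_contra hbk
        push_neg at hbk
        have : t ≤ v (σ b) := hmono (show (⟨k - 1, by omega⟩ : Fin m) ≤ b from hbk)
        exact absurd hb (not_lt.mpr this)
      calc (Finset.univ.filter fun b : Fin m => v (σ b) < t).card
          ≤ (Finset.univ.filter fun b : Fin m => b.val < k - 1).card :=
            Finset.card_le_card hsub2
        _ ≤ (Finset.range (k - 1)).card := by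
            apply Finset.card_le_card_of_injOn (fun b => b.val)
            · intro b hb
              simp only [Finset.mem_coe, Finset.mem_filter, Finset.mem_univ, true_and] at hb
              simpa using hb
            · intro a _ b _ h
              exact Fin.val_injective h
        _ = k - 1 := Finset.card_range _
    calc (Finset.univ.filter fun j => v j < v i).card
        ≤ (Finset.univ.filter fun j => v j < t).card := Finset.card_le_card hsub
      _ ≤ k - 1 := h1 ▸ h2
  -- the image of the k smallest sorted positions lies in the target set
  have himg : ((Finset.univ.filter fun a : Fin m => a.val < k).image σ) ⊆
      (Finset.univ.filter fun i : Fin m =>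
        (Finset.univ.filter fun j => v j < v i).card ≤ k - 1) := by
    intro i hi
    simp only [Finset.mem_image, Finset.mem_filter, Finset.mem_univ, true_and] at hi ⊢
    obtain ⟨a, ha, rfl⟩ := hi
    apply hrank
    exact hmono (show a ≤ (⟨k - 1, by omega⟩ : Fin m) from by
      simpa [Fin.le_def] using Nat.le_sub_one_of_lt ha)
  have hcard : k ≤ ((Finset.univ.filter fun a : Fin m => a.val < k).image σ).card := by
    rw [Finset.card_image_of_injective _ σ.injective]
    have hsub3 : (Finset.univ : Finset (Fin k)).image (Fin.castLE hkm) ⊆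
        (Finset.univ.filter fun a : Fin m => a.val < k) := by
      intro a ha
      simp only [Finset.mem_image, Finset.mem_filter, Finset.mem_univ, true_and] at ha ⊢
      obtain ⟨b, _, rfl⟩ := ha
      exact b.isLt
    have := Finset.card_le_card hsub3
    rwa [Finset.card_image_of_injective _ (Fin.castLE_injective hkm),
      Finset.card_univ, Fintype.card_fin] at this
  exact le_trans hcard (Finset.card_le_card himg)

/-- The rank event in `ℝ^m` is measurable. -/
lemma measurableSet_rank {m c : ℕ} (i : Fin m) :
    MeasurableSet {v : Fin m → ℝ | (Finset.univ.filter fun j => v j < v i).card ≤ c} := by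
  have hcard : Measurable fun v : Fin m → ℝ =>
      (Finset.univ.filter fun j => v j < v i).card := by
    have heq : (fun v : Fin m → ℝ => (Finset.univ.filter fun j => v j < v i).card)
        = fun v => ∑ j : Fin m, if v j < v i then 1 else 0 := by
      funext v
      rw [Finset.card_filter]
    rw [heq]
    exact Finset.measurable_sum _ fun j _ =>
      Measurable.ite (measurableSet_lt (measurable_pi_apply j) (measurable_pi_apply i))
        measurable_const measurable_const
  exact hcard measurableSet_Iic

/-- Under exchangeability, the last of `m = n + 1` scores falls among the `k` smallest
(in the rank-count sense) with probability at least `k / m`: if `Z_1, …, Z_m` are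
exchangeable and `k ∈ {1, …, m}`, then
`P(#{j : Z j < Z m} ≤ k - 1) ≥ k / m`. -/
theorem rank_event_prob_ge
    {Ω : Type*} [MeasurableSpace Ω] (P : Measure Ω) [IsProbabilityMeasure P]
    (n : ℕ) (Z : Fin (n + 1) → Ω → ℝ)
    (hZ : ∀ i, Measurable (Z i))
    (hexch : ∀ π : Equiv.Perm (Fin (n + 1)),
      Measure.map (fun ω => fun i => Z (π i) ω) P = Measure.map (fun ω => fun i => Z i ω) P)
    (k : ℕ) (hk1 : 1 ≤ k) (hkm : k ≤ n + 1) :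
    ENNReal.ofReal ((k : ℝ) / ((n : ℝ) + 1)) ≤
      P {ω | (Finset.univ.filter
        fun j : Fin (n + 1) => Z j ω < Z (Fin.last n) ω).card ≤ k - 1} := by
  -- the target sets
  set B : Fin (n + 1) → Set (Fin (n + 1) → ℝ) := fun i =>
    {v | (Finset.univ.filter fun j => v j < v i).card ≤ k - 1} with hB
  set A : Fin (n + 1) → Set Ω := fun i =>
    {ω | (Finset.univ.filter fun j => Z j ω < Z i ω).card ≤ k - 1} with hA
  have hBmeas : ∀ i, MeasurableSet (B i) := fun i => measurableSet_rank i
  have hF : Measurable (fun ω => fun i => Z i ω) := measurable_pi_lambda _ hZ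
  have hApre : ∀ i, A i = (fun ω => fun i => Z i ω) ⁻¹' (B i) := fun i => rfl
  have hAmeas : ∀ i, MeasurableSet (A i) := fun i => by
    rw [hApre]; exact hF (hBmeas i)
  -- all events have the same probability as the last one
  have hsame : ∀ i : Fin (n + 1), P (A i) = P (A (Fin.last n)) := by
    intro i
    set π := Equiv.swap i (Fin.last n) with hπ
    have hFπ : Measurable (fun ω => fun j => Z (π j) ω) :=
      measurable_pi_lambda _ fun j => hZ (π j)
    have h1 : P ((fun ω => fun j => Z (π j) ω) ⁻¹' (B (Fin.last n)))
        = P ((fun ω => fun i => Z i ω) ⁻¹' (B (Fin.last n))) := by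
      rw [← Measure.map_apply hFπ (hBmeas _), ← Measure.map_apply hF (hBmeas _), hexch π]
    have h2 : (fun ω => fun j => Z (π j) ω) ⁻¹' (B (Fin.last n)) = A i := by
      ext ω
      simp only [hB, hA, Set.mem_preimage, Set.mem_setOf_eq]
      have hπlast : π (Fin.last n) = i := Equiv.swap_apply_right _ _
      simp only [hπlast]
      rw [card_filter_perm π (fun j => Z j ω < Z i ω)]
    rw [← h2, h1, hApre]
  -- pointwise: at least k of the events hold
  have hpoint : ∀ ω, (k : ℝ≥0∞) ≤ ∑ i : Fin (n + 1), (A i).indicator (fun _ => 1) ω := by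
    intro ω
    have hsum : ∑ i : Fin (n + 1), (A i).indicator (fun _ => (1 : ℝ≥0∞)) ω
        = ((Finset.univ.filter fun i : Fin (n + 1) => ω ∈ A i).card : ℝ≥0∞) := by
      rw [Finset.card_filter]
      push_cast
      apply Finset.sum_congr rfl
      intro i _
      by_cases h : ω ∈ A i <;> simp [Set.indicator, h]
    rw [hsum]
    have := card_rank_le_ge hk1 hkm (fun i => Z i ω)
    exact_mod_cast this
  -- sum the probabilities
  have hsumP : (k : ℝ≥0∞) ≤ ∑ i : Fin (n + 1), P (A i) := by
    have h1 : ∑ i : Fin (n + 1), P (A i)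
        = ∫⁻ ω, ∑ i : Fin (n + 1), (A i).indicator (fun _ => 1) ω ∂P := by
      rw [lintegral_finset_sum]
      · apply Finset.sum_congr rfl
        intro i _
        rw [lintegral_indicator (hAmeas i)]
        simp
      · intro i _
        exact (measurable_const.indicator (hAmeas i))
    rw [h1]
    calc (k : ℝ≥0∞) = ∫⁻ _, (k : ℝ≥0∞) ∂P := by simp
      _ ≤ ∫⁻ ω, ∑ i : Fin (n + 1), (A i).indicator (fun _ => 1) ω ∂P :=
          lintegral_mono fun ω => hpoint ω
  have hsum_eq : ∑ i : Fin (n + 1), P (A i) = ((n + 1 : ℕ) : ℝ≥0∞) * P (A (Fin.last n)) := by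
    rw [Finset.sum_congr rfl fun i _ => hsame i]
    simp [mul_comm]
  rw [hsum_eq] at hsumP
  -- conclude
  have hgoal : ENNReal.ofReal ((k : ℝ) / ((n : ℝ) + 1)) = (k : ℝ≥0∞) / ((n + 1 : ℕ) : ℝ≥0∞) := by
    rw [ENNReal.ofReal_div_of_pos (by positivity)]
    congr 1
    · exact ENNReal.ofReal_natCast k
    · push_cast; rw [ENNReal.ofReal_add (by positivity) (by norm_num)]
      simp
  rw [hgoal]
  rw [ENNReal.div_le_iff_le_mul (Or.inl (by simp)) (Or.inl (by simp))]
  rw [mul_comm] at hsumP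
  convert hsumP using 2
end

section
/- Let s_1, …, s_n be real numbers, let 1 ≤ k ≤ n, and let t be a real number. Then t is at most the k-th smallest value among s_1, …, s_n if and only if t is at most the k-th smallest value among the n+1 numbers s_1, …, s_n, t. -/
lemma le_sorted_getD_iff (L : List ℝ) (hL : L.Pairwise (· ≤ ·)) (j : ℕ) (hj : j < L.length)
    (t : ℝ) : t ≤ L.getD j 0 ↔ L.countP (fun x => decide (x < t)) ≤ j := by
  rw [List.getD_eq_getElem L 0 hj]
  constructor
  · intro h
    have hdrop : (L.drop j).countP (fun x => decide (x < t)) = 0 := by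
      rw [List.countP_eq_zero]
      intro x hx
      obtain ⟨i, hi, rfl⟩ := List.mem_iff_getElem.mp hx
      rw [List.getElem_drop]
      simp only [decide_eq_true_eq, not_lt]
      refine h.trans ?_
      have hdl : (L.drop j).length = L.length - j := List.length_drop
      rcases Nat.eq_zero_or_pos i with rfl | hpos
      · simp
      · exact List.pairwise_iff_getElem.mp hL j (j + i) (by omega) (by omega) (by omega)
    have := List.countP_append (p := fun x => decide (x < t)) (l₁ := L.take j) (l₂ := L.drop j)
    rw [List.take_append_drop] at this
    rw [this, hdrop, Nat.add_zero]
    exact List.countP_le_length.trans (by simp)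
  · intro h
    by_contra hlt
    push_neg at hlt
    have htake : (L.take (j+1)).countP (fun x => decide (x < t)) = j + 1 := by
      have hall : ∀ x ∈ L.take (j+1), decide (x < t) = true := by
        intro x hx
        obtain ⟨i, hi, rfl⟩ := List.mem_iff_getElem.mp hx
        rw [List.getElem_take]
        simp only [decide_eq_true_eq]
        have hi' : i < j + 1 := by simpa using (hi.trans_le (List.length_take_le _ _))
        rcases Nat.lt_or_ge i j with h' | h'
        · exact lt_of_le_of_lt (List.pairwise_iff_getElem.mp hL i j (by omega) hj h') hlt
        · have : i = j := by omega
          subst this; exact hlt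
      rw [List.countP_eq_length.mpr hall, List.length_take]
      omega
    have := List.countP_append (p := fun x => decide (x < t)) (l₁ := L.take (j+1)) (l₂ := L.drop (j+1))
    rw [List.take_append_drop, htake] at this
    omega


/-- Add-the-test-point lemma: `t` is at most the `k`-th smallest of `s_1, …, s_n` if and
only if `t` is at most the `k`-th smallest of the `n + 1` numbers `s_1, …, s_n, t`. -/
theorem le_kthSmallest_iff_le_kthSmallest_snoc
    (n : ℕ) (s : Fin n → ℝ) (k : ℕ) (hk1 : 1 ≤ k) (hkn : k ≤ n) (t : ℝ) :
    t ≤ kthSmallest s k ↔ t ≤ kthSmallest (Fin.snoc s t : Fin (n + 1) → ℝ) k := by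
  set M : Multiset ℝ := Multiset.ofList (List.ofFn s) with hM
  have hM' : (Multiset.ofList (List.ofFn (Fin.snoc s t : Fin (n + 1) → ℝ))) = t ::ₘ M := by
    rw [List.ofFn_succ']
    simp only [Fin.snoc_castSucc, Fin.snoc_last, List.concat_eq_append]
    rw [hM, ← Multiset.coe_add]
    rw [add_comm]
    rfl
  unfold kthSmallest
  rw [hM']
  have hcard : (M.sort (· ≤ ·)).length = n := by
    rw [Multiset.length_sort]; simp [hM]
  have hcard' : ((t ::ₘ M).sort (· ≤ ·)).length = n + 1 := by
    rw [Multiset.length_sort]; simp [hM]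
  rw [le_sorted_getD_iff _ (Multiset.pairwise_sort _ _) _ (by rw [hcard]; omega) t,
      le_sorted_getD_iff _ (Multiset.pairwise_sort _ _) _ (by rw [hcard']; omega) t]
  have key : ∀ (N : Multiset ℝ), (N.sort (· ≤ ·)).countP (fun x => decide (x < t))
      = N.countP (fun x => x < t) := by
    intro N
    rw [← Multiset.coe_countP]
    congr 1
    exact Multiset.sort_eq _ _
  rw [key, key, Multiset.countP_cons]
  simp [hM, Multiset.coe_countP]
end

section
/- Let (X_i, Y_i), i = 1, …, n+1, be i.i.d. random variables with values in a product of measurable spaces 𝒳 × 𝒴, let s : 𝒳 × 𝒴 → ℝ be measurable, let β ∈ (0,1), set k = ⌈(n+1)(1−β)⌉, and assume k ≤ n. Let q̂_abstain be the (random) k-th smallest value among s(X_1, Y_1), …, s(X_n, Y_n). Then the probability that the two-threshold policy abstains on the test point while its score exceeds the abstention threshold, namely P( s(X_{n+1}, Y_{n+1}) > q̂_abstain ), is at most β. -/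
open MeasureTheory ProbabilityTheory

lemma CAb_card_filter_eq_countP {n : ℕ} (f : Fin n → ℝ) (p : ℝ → Prop) [DecidablePred p] :
    (Finset.univ.filter fun i => p (f i)).card = (List.ofFn f).countP (fun x => decide (p x)) := by
  rw [List.ofFn_eq_map, List.countP_map]
  simp [Finset.card_filter, List.countP_eq_length_filter, Fin.univ_def, Finset.filter]
  rfl

lemma CAb_perm {n : ℕ} (f : Fin n → ℝ) :
    ((Multiset.ofList (List.ofFn f)).sort (· ≤ ·)).Perm (List.ofFn f) := by
  rw [← Multiset.coe_eq_coe, Multiset.sort_eq]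

lemma CAb_card_filter_eq_countP' {n : ℕ} (f : Fin n → ℝ) (p : ℝ → Prop) [DecidablePred p] :
    (Finset.univ.filter fun i => p (f i)).card
      = ((Multiset.ofList (List.ofFn f)).sort (· ≤ ·)).countP (fun x => decide (p x)) := by
  rw [CAb_card_filter_eq_countP, (CAb_perm f).countP_eq]

lemma CAb_length_sort {n : ℕ} (f : Fin n → ℝ) :
    ((Multiset.ofList (List.ofFn f)).sort (· ≤ ·)).length = n := by
  rw [Multiset.length_sort]; simp

lemma CAb_countP_eq_card_get {l : List ℝ} (p : ℝ → Prop) [DecidablePred p] :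
    l.countP (fun x => decide (p x)) = (Finset.univ.filter fun j : Fin l.length => p (l.get j)).card := by
  rw [CAb_card_filter_eq_countP l.get p, List.ofFn_get]

lemma CAb_lower {l : List ℝ} (hl : l.Pairwise (· ≤ ·)) {i : ℕ} (h : i < l.length)
    (p : ℝ → Prop) [DecidablePred p] (hp : ∀ x ≤ l.get ⟨i, h⟩, p x) :
    i + 1 ≤ (Finset.univ.filter fun j : Fin l.length => p (l.get j)).card := by
  have := Finset.card_le_card_of_injOn
    (f := fun m : Fin (i+1) => (⟨(m : ℕ), lt_of_lt_of_le m.2 h⟩ : Fin l.length))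
    (s := Finset.univ) (t := Finset.univ.filter fun j : Fin l.length => p (l.get j))
    (fun m _ => by
      simp only [Finset.mem_coe, Finset.mem_filter, Finset.mem_univ, true_and]
      exact hp _ (hl.rel_get_of_le (a := ⟨(m : ℕ), lt_of_lt_of_le m.2 h⟩) (Fin.mk_le_mk.2 (Nat.le_of_lt_succ m.2))))
    (fun a _ b _ hab => by simpa [Fin.ext_iff] using hab)
  simpa using this

lemma CAb_upper {l : List ℝ} (hl : l.Pairwise (· ≤ ·)) {i : ℕ} (h : i < l.length)
    (p : ℝ → Prop) [DecidablePred p] (hp : ∀ x, p x → x < l.get ⟨i, h⟩) :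
    (Finset.univ.filter fun j : Fin l.length => p (l.get j)).card ≤ i := by
  have hsub : (Finset.univ.filter fun j : Fin l.length => p (l.get j))
      ⊆ Finset.univ.filter fun j : Fin l.length => (j : ℕ) < i := by
    intro j hj
    simp only [Finset.mem_filter, Finset.mem_univ, true_and] at hj ⊢
    by_contra hji
    push_neg at hji
    exact absurd (hp _ hj) (not_lt.2 (hl.rel_get_of_le (show (⟨i,h⟩ : Fin l.length) ≤ j from hji)))
  refine le_trans (Finset.card_le_card hsub) ?_
  have := Finset.card_le_card_of_injOn (f := fun j : Fin l.length => (j : ℕ))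
    (s := Finset.univ.filter fun j : Fin l.length => (j : ℕ) < i) (t := Finset.range i)
    (fun j hj => by simpa using (Finset.mem_filter.1 hj).2)
    (fun a _ b _ hab => Fin.ext hab)
  simpa using this

lemma CAb_kthSmallest_lt_iff {n : ℕ} (f : Fin n → ℝ) {k : ℕ} (hk1 : 1 ≤ k) (hkn : k ≤ n) (t : ℝ) :
    kthSmallest f k < t ↔ k ≤ (Finset.univ.filter fun i => f i < t).card := by
  set l := (Multiset.ofList (List.ofFn f)).sort (· ≤ ·) with hldef
  have hlen : l.length = n := CAb_length_sort f
  have hsort : l.Pairwise (· ≤ ·) := Multiset.pairwise_sort _ _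
  have hidx : k - 1 < l.length := by omega
  have hq : kthSmallest f k = l.get ⟨k - 1, hidx⟩ := by
    rw [kthSmallest, List.getD_eq_getElem _ _ hidx]; rfl
  have h1 := CAb_card_filter_eq_countP' f (fun x => x < t)
  rw [← hldef] at h1
  have h2 := CAb_countP_eq_card_get (l := l) (fun x => x < t)
  rw [hq, h1, h2]
  constructor
  · intro hlt
    have := CAb_lower hsort hidx (fun x => x < t) (fun x hx => lt_of_le_of_lt hx hlt)
    omega
  · intro hc
    by_contra hnot
    push_neg at hnot
    have := CAb_upper hsort hidx (fun x => x < t) ?_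
    · omega
    · intro x hx
      exact lt_of_lt_of_le hx hnot

lemma CAb_card_le_kth {n : ℕ} (f : Fin n → ℝ) {k : ℕ} (hk1 : 1 ≤ k) (hkn : k ≤ n) :
    k ≤ (Finset.univ.filter fun i => f i ≤ kthSmallest f k).card := by
  set l := (Multiset.ofList (List.ofFn f)).sort (· ≤ ·) with hldef
  have hlen : l.length = n := CAb_length_sort f
  have hsort : l.Pairwise (· ≤ ·) := Multiset.pairwise_sort _ _
  have hidx : k - 1 < l.length := by omega
  have hq : kthSmallest f k = l.get ⟨k - 1, hidx⟩ := by
    rw [kthSmallest, List.getD_eq_getElem _ _ hidx]; rfl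
  have h1 := CAb_card_filter_eq_countP' f (fun x => x ≤ kthSmallest f k)
  rw [← hldef] at h1
  have h2 := CAb_countP_eq_card_get (l := l) (fun x => x ≤ kthSmallest f k)
  rw [h1, h2]
  have := CAb_lower hsort hidx (fun x => x ≤ kthSmallest f k)
    (fun x hx => by rw [hq]; exact hx)
  omega

lemma CAb_count_bound {N : ℕ} (v : Fin N → ℝ) {k : ℕ} (hk1 : 1 ≤ k) (hkN : k ≤ N) :
    (Finset.univ.filter fun j : Fin N =>
      k ≤ (Finset.univ.filter fun i => v i < v j).card).card ≤ N - k := by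
  classical
  have hset : (Finset.univ.filter fun j : Fin N =>
      k ≤ (Finset.univ.filter fun i => v i < v j).card)
      = Finset.univ.filter fun j : Fin N => ¬ (v j ≤ kthSmallest v k) := by
    apply Finset.filter_congr
    intro j _
    rw [not_le, ← CAb_kthSmallest_lt_iff v hk1 hkN (v j)]
  rw [hset, Finset.filter_not, Finset.card_sdiff_of_subset (Finset.filter_subset _ _)]
  simp only [Finset.card_univ, Fintype.card_fin]
  exact Nat.sub_le_sub_left (CAb_card_le_kth v hk1 hkN) N

open MeasureTheory ProbabilityTheory in
lemma CAb_map_pi {Ω : Type*} [MeasurableSpace Ω] (P : Measure Ω) [IsProbabilityMeasure P]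
    {N : ℕ} (T : Fin N → Ω → ℝ) (hT : ∀ i, Measurable (T i))
    (hind : iIndepFun T P) :
    P.map (fun ω i => T i ω) = Measure.pi (fun i => P.map (T i)) := by
  haveI : ∀ i, IsProbabilityMeasure (P.map (T i)) :=
    fun i => Measure.isProbabilityMeasure_map (hT i).aemeasurable
  have hJ : Measurable (fun ω i => T i ω) := measurable_pi_lambda _ hT
  haveI : ∀ i : Fin N, SigmaFinite (P.map (T i)) := fun i => inferInstance
  refine (Measure.pi_eq (μ := fun i => P.map (T i)) fun s hs => ?_).symm
  rw [Measure.map_apply hJ (MeasurableSet.univ_pi hs)]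
  have hpre : (fun ω i => T i ω) ⁻¹' Set.pi Set.univ s = ⋂ i, T i ⁻¹' s i := by
    ext ω; simp [Set.mem_pi]
  rw [hpre]
  have := hind.measure_inter_preimage_eq_mul Finset.univ (fun i _ => hs i)
  simp only [Finset.mem_univ, Set.iInter_true] at this
  rw [this]
  exact Finset.prod_congr rfl fun i _ => (Measure.map_apply (hT i) (hs i)).symm

open MeasureTheory in
lemma CAb_pi_perm {μ : Measure ℝ} [IsProbabilityMeasure μ] {N : ℕ} (σ : Equiv.Perm (Fin N)) :
    (Measure.pi fun _ : Fin N => μ).map (fun v i => v (σ i)) = Measure.pi fun _ : Fin N => μ := by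
  have h := measurePreserving_piCongrLeft (fun _ : Fin N => μ) σ.symm
  have hco : ⇑(MeasurableEquiv.piCongrLeft (fun _ : Fin N => ℝ) σ.symm)
      = fun v i => v (σ i) := by
    funext v i
    have h2 := MeasurableEquiv.piCongrLeft_apply_apply
      (σ.symm : Fin N ≃ Fin N) (β := fun _ : Fin N => ℝ) v (σ i)
    simpa using h2
  rw [← hco]
  exact h.map_eq

/-- Abstention bound for the two-threshold conformal policy: for i.i.d. pairs
`(X i, Y i)`, a measurable score `s`, `β ∈ (0,1)`, `k = ⌈(n+1)(1-β)⌉ ≤ n`, and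
`q̂_abstain` the `k`-th smallest calibration score, the probability that the test score
exceeds the abstention threshold is at most `β`. -/
theorem conformal_abstention_bound
    {Ω : Type*} [MeasurableSpace Ω] (P : Measure Ω) [IsProbabilityMeasure P]
    {𝒳 𝒴 : Type*} [MeasurableSpace 𝒳] [MeasurableSpace 𝒴]
    (n : ℕ) (X : Fin (n + 1) → Ω → 𝒳) (Y : Fin (n + 1) → Ω → 𝒴)
    (hXY : ∀ i, Measurable (fun ω => (X i ω, Y i ω)))
    (hindep : iIndepFun (fun i ω => (X i ω, Y i ω)) P)
    (hident : ∀ i j, IdentDistrib (fun ω => (X i ω, Y i ω)) (fun ω => (X j ω, Y j ω)) P P)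
    (s : 𝒳 × 𝒴 → ℝ) (hs : Measurable s)
    (β : ℝ) (hβ : β ∈ Set.Ioo (0 : ℝ) 1)
    (k : ℕ) (hk : k = ⌈((n : ℝ) + 1) * (1 - β)⌉₊) (hkn : k ≤ n)
    (qAbstain : Ω → ℝ)
    (hq : ∀ ω, qAbstain ω =
      kthSmallest (fun i : Fin n => s (X i.castSucc ω, Y i.castSucc ω)) k) :
    P {ω | qAbstain ω < s (X (Fin.last n) ω, Y (Fin.last n) ω)} ≤ ENNReal.ofReal β := by
  classical
  obtain ⟨hβ0, hβ1⟩ := hβ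
  set T : Fin (n + 1) → Ω → ℝ := fun i ω => s (X i ω, Y i ω) with hTdef
  have hTm : ∀ i, Measurable (T i) := fun i => hs.comp (hXY i)
  have hk1 : 1 ≤ k := by
    rw [hk]
    rw [Nat.one_le_ceil_iff]
    have : (0:ℝ) < 1 - β := by linarith
    positivity
  have hkN : k ≤ n + 1 := le_trans hkn (Nat.le_succ n)
  have hindT : iIndepFun T P :=
    hindep.comp (fun _ => s) (fun _ => hs)
  have hidentT : ∀ i, P.map (T i) = P.map (T (Fin.last n)) := fun i =>
    ((hident i (Fin.last n)).comp hs).map_eq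
  set μ := P.map (T (Fin.last n)) with hμdef
  haveI : IsProbabilityMeasure μ := Measure.isProbabilityMeasure_map (hTm _).aemeasurable
  have hJ : Measurable (fun ω (i : Fin (n + 1)) => T i ω) := measurable_pi_lambda _ hTm
  set ν := Measure.pi (fun _ : Fin (n + 1) => μ) with hνdef
  have hlaw : P.map (fun ω i => T i ω) = ν := by
    rw [CAb_map_pi P T hTm hindT, hνdef]
    congr 1
    funext i
    exact hidentT i
  -- events
  set B : Fin (n + 1) → Set (Fin (n + 1) → ℝ) := fun j =>
    {v | k ≤ (Finset.univ.filter fun i => i ≠ j ∧ v i < v j).card} with hBdef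
  have hBmeas : ∀ j, MeasurableSet (B j) := by
    intro j
    have hc : Measurable fun v : Fin (n + 1) → ℝ =>
        (Finset.univ.filter fun i => i ≠ j ∧ v i < v j).card := by
      simp only [Finset.card_filter]
      apply Finset.measurable_sum
      intro i _
      refine Measurable.ite ?_ measurable_const measurable_const
      have : {v : Fin (n + 1) → ℝ | i ≠ j ∧ v i < v j}
          = {v : Fin (n + 1) → ℝ | i ≠ j} ∩ {v | v i < v j} := rfl
      rw [this]
      exact (MeasurableSet.const _).inter
        (measurableSet_lt (measurable_pi_apply i) (measurable_pi_apply j))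
    exact hc (measurableSet_Ici (a := k))
  -- filters without the ≠ condition
  have hBalt : ∀ (j : Fin (n + 1)) (v : Fin (n + 1) → ℝ),
      (Finset.univ.filter fun i => i ≠ j ∧ v i < v j)
      = (Finset.univ.filter fun i => v i < v j) := by
    intro j v
    apply Finset.filter_congr
    intro i _
    constructor
    · exact fun h => h.2
    · intro h
      refine ⟨?_, h⟩
      rintro rfl
      exact lt_irrefl _ h
  -- event identification
  have hev : {ω | qAbstain ω < T (Fin.last n) ω} = (fun ω i => T i ω) ⁻¹' B (Fin.last n) := by
    ext ω
    simp only [Set.mem_setOf_eq, Set.mem_preimage, hBdef]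
    rw [hq ω]
    rw [CAb_kthSmallest_lt_iff _ hk1 hkn (T (Fin.last n) ω)]
    have himg : (Finset.univ.filter fun i : Fin (n + 1) =>
          i ≠ Fin.last n ∧ T i ω < T (Fin.last n) ω)
        = (Finset.univ.filter fun i : Fin n =>
          T i.castSucc ω < T (Fin.last n) ω).image Fin.castSucc := by
      ext a
      simp only [Finset.mem_filter, Finset.mem_image, Finset.mem_univ, true_and]
      constructor
      · rintro ⟨hane, hav⟩
        refine ⟨a.castPred hane, ?_, ?_⟩
        · rwa [Fin.castSucc_castPred]
        · rw [Fin.castSucc_castPred]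
      · rintro ⟨b, hb, rfl⟩
        exact ⟨Fin.ne_of_lt (Fin.castSucc_lt_last b), hb⟩
    rw [himg, Finset.card_image_of_injective _ (Fin.castSucc_injective n)]
  -- exchangeability
  have hBj : ∀ j, ν (B j) = ν (B (Fin.last n)) := by
    intro j
    set σ : Equiv.Perm (Fin (n + 1)) := Equiv.swap j (Fin.last n) with hσ
    have hσmeas : Measurable (fun v : Fin (n + 1) → ℝ => fun i => v (σ i)) :=
      measurable_pi_lambda _ fun i => measurable_pi_apply _
    have hswap : B j = (fun v : Fin (n + 1) → ℝ => fun i => v (σ i)) ⁻¹' B (Fin.last n) := by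
      ext v
      simp only [Set.mem_preimage, hBdef, Set.mem_setOf_eq]
      have himg : (Finset.univ.filter fun i => i ≠ j ∧ v i < v j)
          = (Finset.univ.filter fun i => i ≠ Fin.last n ∧ v (σ i) < v (σ (Fin.last n))).image σ := by
        ext a
        simp only [Finset.mem_filter, Finset.mem_image, Finset.mem_univ, true_and]
        constructor
        · rintro ⟨haj, hav⟩
          refine ⟨σ a, ⟨?_, ?_⟩, by simp [hσ]⟩
          · intro hcon
            apply haj
            have : a = σ (Fin.last n) := by
              rw [← hcon]; simp [hσ]
            rw [this, hσ, Equiv.swap_apply_right]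
          · simp only [hσ, Equiv.swap_apply_self, Equiv.swap_apply_right]
            exact hav
        · rintro ⟨b, ⟨hb, hbv⟩, rfl⟩
          constructor
          · intro hcon
            exact hb (σ.injective (hcon.trans (Equiv.swap_apply_right j (Fin.last n)).symm))
          · simpa [hσ, Equiv.swap_apply_right] using hbv
      rw [himg, Finset.card_image_of_injective _ σ.injective]
    rw [hswap, ← Measure.map_apply hσmeas (hBmeas (Fin.last n)), hνdef, CAb_pi_perm]
  haveI : IsProbabilityMeasure ν := by
    rw [hνdef]; infer_instance
  -- sum bound
  have hsum : ∑ j : Fin (n + 1), ν (B j) ≤ ((n + 1 - k : ℕ) : ENNReal) := by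
    have h1 : ∀ j, ν (B j) = ∫⁻ v, Set.indicator (B j) (1 : (Fin (n+1) → ℝ) → ENNReal) v ∂ν :=
      fun j => (lintegral_indicator_one (hBmeas j)).symm
    calc ∑ j : Fin (n + 1), ν (B j)
        = ∫⁻ v, ∑ j : Fin (n + 1), Set.indicator (B j) (1 : (Fin (n+1) → ℝ) → ENNReal) v ∂ν := by
          rw [lintegral_finset_sum]
          · exact Finset.sum_congr rfl fun j _ => h1 j
          · exact fun j _ => (measurable_const.indicator (hBmeas j))
      _ ≤ ∫⁻ _, ((n + 1 - k : ℕ) : ENNReal) ∂ν := by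
          apply lintegral_mono
          intro v
          simp only []
          have hcard : ∑ j : Fin (n + 1), Set.indicator (B j) (1 : (Fin (n+1) → ℝ) → ENNReal) v
              = ((Finset.univ.filter fun j : Fin (n + 1) =>
                  k ≤ (Finset.univ.filter fun i => v i < v j).card).card : ENNReal) := by
            rw [Finset.card_filter]
            push_cast
            apply Finset.sum_congr rfl
            intro j _
            rw [Set.indicator_apply]
            simp only [hBdef, Set.mem_setOf_eq, hBalt j v]
            split <;> simp
          rw [hcard]
          exact_mod_cast Nat.cast_le.2 (CAb_count_bound v hk1 hkN)
      _ = ((n + 1 - k : ℕ) : ENNReal) := by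
          rw [lintegral_const, measure_univ, mul_one]
  have hsum2 : ∑ j : Fin (n + 1), ν (B j) = (n + 1 : ℕ) * ν (B (Fin.last n)) := by
    rw [Finset.sum_congr rfl fun j _ => hBj j, Finset.sum_const, Finset.card_univ,
      Fintype.card_fin, nsmul_eq_mul]
  -- final arithmetic
  have hPeq : P {ω | qAbstain ω < s (X (Fin.last n) ω, Y (Fin.last n) ω)} = ν (B (Fin.last n)) := by
    have : {ω | qAbstain ω < s (X (Fin.last n) ω, Y (Fin.last n) ω)}
        = {ω | qAbstain ω < T (Fin.last n) ω} := rfl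
    rw [this, hev, ← Measure.map_apply hJ (hBmeas (Fin.last n)), hlaw]
  rw [hPeq]
  have hmul : ((n + 1 : ℕ) : ENNReal) * ν (B (Fin.last n)) ≤ ((n + 1 : ℕ) : ENNReal) * ENNReal.ofReal β := by
    rw [← hsum2]
    refine le_trans hsum ?_
    have hkR : ((n : ℝ) + 1) * (1 - β) ≤ (k : ℝ) := by
      rw [hk]; exact Nat.le_ceil _
    have hsubR : ((n + 1 - k : ℕ) : ℝ) ≤ ((n : ℝ) + 1) * β := by
      rw [Nat.cast_sub hkN]
      push_cast
      nlinarith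
    calc ((n + 1 - k : ℕ) : ENNReal) = ENNReal.ofReal ((n + 1 - k : ℕ) : ℝ) := by
          rw [ENNReal.ofReal_natCast]
      _ ≤ ENNReal.ofReal (((n : ℝ) + 1) * β) := ENNReal.ofReal_le_ofReal hsubR
      _ = ENNReal.ofReal ((n : ℝ) + 1) * ENNReal.ofReal β := by
          rw [ENNReal.ofReal_mul (by positivity)]
      _ = ((n + 1 : ℕ) : ENNReal) * ENNReal.ofReal β := by
          congr 1
          rw [← ENNReal.ofReal_natCast (n + 1)]
          push_cast
          ring_nf
  have hne0 : ((n + 1 : ℕ) : ENNReal) ≠ 0 := by simp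
  have hnetop : ((n + 1 : ℕ) : ENNReal) ≠ ⊤ := by simp
  exact (ENNReal.mul_le_mul_iff_right hne0 hnetop).1 hmul
end
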